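/- Let F be a field, let p be a natural number whose image in F is nonzero, and let σ̄, τ̄ ∈ PGL₂(F) with τ̄ the class of the matrix [[1,1],[0,1]]. If σ̄ τ̄ σ̄⁻¹ = τ̄^p, then σ̄ is the class of a matrix of the form [[p, b],[0, 1]] for some b ∈ F. -/
import Mathlib


/-- `GL₂(F)`. -/
abbrev GL2 (F : Type*) [Field F] := Matrix.GeneralLinearGroup (Fin 2) F

/-- `PGL₂(F)`: the quotient of `GL₂(F)` by its center. -/
abbrev PGL2 (F : Type*) [Field F] := GL2 F ⧸ Subgroup.center (GL2 F)

lemma unipotent_pow (F : Type*) [Field F] (n : ℕ) :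
    (!![1, 1; 0, 1] : Matrix (Fin 2) (Fin 2) F) ^ n = !![1, (n : F); 0, 1] := by
  induction n with
  | zero => simp [Matrix.one_fin_two]
  | succ k ih =>
      rw [pow_succ, ih]
      norm_num [Matrix.mul_fin_two, add_comm]

/-- scalar units are central in GL2 -/
lemma scalar_unit_mem_center (F : Type*) [Field F] (d : F) (hd : d ≠ 0) :
    (⟨d • 1, d⁻¹ • 1, by simp [smul_smul, mul_inv_cancel₀ hd, inv_mul_cancel₀ hd],
      by simp [smul_smul, mul_inv_cancel₀ hd, inv_mul_cancel₀ hd]⟩ : GL2 F) ∈ Subgroup.center (GL2 F) := by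
  rw [Subgroup.mem_center_iff]
  intro g
  ext i j
  show ((g : Matrix (Fin 2) (Fin 2) F) * (d • 1)) i j = ((d • (1 : Matrix (Fin 2) (Fin 2) F)) * g) i j
  rw [Matrix.mul_smul, Matrix.smul_mul, Matrix.mul_one, Matrix.one_mul]

/-- Let `F` be a field, `p` a natural number whose image in `F` is nonzero, and let
`σ̄, τ̄ ∈ PGL₂(F)` with `τ̄` the class of the matrix `[[1,1],[0,1]]`.  If
`σ̄ τ̄ σ̄⁻¹ = τ̄^p`, then `σ̄` is the class of a matrix of the form `[[p, b],[0, 1]]`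
for some `b ∈ F`. -/
theorem conj_of_unipotent_eq_pow (F : Type*) [Field F] (p : ℕ) (hp : (p : F) ≠ 0)
    (σbar τbar : PGL2 F) (t : GL2 F)
    (ht : (t : Matrix (Fin 2) (Fin 2) F) = !![1, 1; 0, 1])
    (hτ : τbar = QuotientGroup.mk t)
    (hconj : σbar * τbar * σbar⁻¹ = τbar ^ p) :
    ∃ (b : F) (g : GL2 F), (g : Matrix (Fin 2) (Fin 2) F) = !![(p : F), b; 0, 1] ∧
      σbar = QuotientGroup.mk g := by
  obtain ⟨s, rfl⟩ := QuotientGroup.mk_surjective σbar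
  subst hτ
  rw [← QuotientGroup.mk_inv, ← QuotientGroup.mk_mul, ← QuotientGroup.mk_mul,
    ← QuotientGroup.mk_pow, QuotientGroup.eq] at hconj
  set z : GL2 F := (s * t * s⁻¹)⁻¹ * (t ^ p) with hz
  have hzc : z ∈ Subgroup.center (GL2 F) := hconj
  -- the key unit-level equation
  have hkey : s * t * z = t ^ p * s := by
    have h1 : s * t * s⁻¹ * z = t ^ p := by
      rw [hz]; group
    have h2 : s * z = z * s := Subgroup.mem_center_iff.mp hzc s
    have h3 : s * t * s⁻¹ * z * s = t ^ p * s := by rw [h1]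
    rw [mul_assoc (s * t * s⁻¹) z s, ← h2, ← mul_assoc, mul_assoc (s * t) s⁻¹ s,
      inv_mul_cancel, mul_one] at h3
    exact h3
  -- z is a scalar matrix
  have hzt : (t : Matrix (Fin 2) (Fin 2) F) * z = (z : Matrix (Fin 2) (Fin 2) F) * t := by
    have := Subgroup.mem_center_iff.mp hzc t
    exact_mod_cast congrArg Units.val this
  -- a second unit to test centrality
  have hdet' : (!![1, 0; 1, 1] : Matrix (Fin 2) (Fin 2) F).det ≠ 0 := by
    simp [Matrix.det_fin_two_of]
  set t' : GL2 F := Matrix.GeneralLinearGroup.mkOfDetNeZero _ hdet' with ht'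
  have ht'v : (t' : Matrix (Fin 2) (Fin 2) F) = !![1, 0; 1, 1] := rfl
  have hzt' : (t' : Matrix (Fin 2) (Fin 2) F) * z = (z : Matrix (Fin 2) (Fin 2) F) * t' := by
    have := Subgroup.mem_center_iff.mp hzc t'
    exact_mod_cast congrArg Units.val this
  set Z : Matrix (Fin 2) (Fin 2) F := (z : Matrix (Fin 2) (Fin 2) F) with hZ
  have hZeta : Z = !![Z 0 0, Z 0 1; Z 1 0, Z 1 1] := Matrix.eta_fin_two Z
  obtain ⟨r, hzscalar⟩ : ∃ r : F, Z = r • 1 := by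
    refine ⟨Z 0 0, ?_⟩
    rw [ht, hZeta] at hzt
    rw [ht'v, hZeta] at hzt'
    have e1 := congrFun (congrFun hzt 0) 1
    have e2 := congrFun (congrFun hzt 1) 1
    have e3 := congrFun (congrFun hzt' 0) 0
    simp [Matrix.mul_fin_two] at e1 e2 e3
    have h11 : Z 1 1 = Z 0 0 := by
      simp only [e3, zero_add, add_zero] at e1
      exact e1
    have hone : Z 0 0 • (1 : Matrix (Fin 2) (Fin 2) F) = !![Z 0 0, 0; 0, Z 0 0] := by
      ext i j
      fin_cases i <;> fin_cases j <;> simp [Matrix.one_apply]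
    calc Z = !![Z 0 0, Z 0 1; Z 1 0, Z 1 1] := hZeta
      _ = !![Z 0 0, 0; 0, Z 0 0] := by rw [e2, e3, h11]
      _ = Z 0 0 • 1 := hone.symm
  have hsv : ((s⁻¹ : GL2 F) : Matrix (Fin 2) (Fin 2) F) * s = 1 := s.inv_mul
  have hsv' : (s : Matrix (Fin 2) (Fin 2) F) * ((s⁻¹ : GL2 F) : Matrix (Fin 2) (Fin 2) F) = 1 :=
    s.mul_inv
  have hkeym : (s : Matrix (Fin 2) (Fin 2) F) * t * Z = (t : Matrix (Fin 2) (Fin 2) F) ^ p * s := by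
    simpa only [Units.val_mul, Units.val_pow_eq_pow_val] using congrArg Units.val hkey
  have htp : (t : Matrix (Fin 2) (Fin 2) F) ^ p = !![1, (p : F); 0, 1] := by
    rw [ht, unipotent_pow]
  have hdetS : (s : Matrix (Fin 2) (Fin 2) F).det ≠ 0 := by
    intro h
    have hds : (s : Matrix (Fin 2) (Fin 2) F).det *
        ((s⁻¹ : GL2 F) : Matrix (Fin 2) (Fin 2) F).det = 1 := by
      rw [← Matrix.det_mul, hsv', Matrix.det_one]
    rw [h, zero_mul] at hds
    exact zero_ne_one hds
  have h4 : r • ((s : Matrix (Fin 2) (Fin 2) F) * t) = (t : Matrix (Fin 2) (Fin 2) F) ^ p * s := by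
    rw [← hkeym, hzscalar, Matrix.mul_smul, Matrix.mul_one]
  -- determinant gives r ^ 2 = 1
  have hdetr : r ^ 2 = 1 := by
    have h5 := congrArg Matrix.det h4
    rw [Matrix.det_smul, Matrix.det_mul, Matrix.det_mul, htp, ht] at h5
    simp [Matrix.det_fin_two_of] at h5
    have h5' : (r ^ 2 - 1) * (s : Matrix (Fin 2) (Fin 2) F).det = 0 := by linear_combination h5
    rcases mul_eq_zero.mp h5' with h | h
    · linear_combination h
    · exact absurd h hdetS
  -- trace gives 2 * r = 2
  have htr : 2 * r = 2 := by
    have h6 : r • ((s : Matrix (Fin 2) (Fin 2) F) * t *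
        ((s⁻¹ : GL2 F) : Matrix (Fin 2) (Fin 2) F)) = !![1, (p : F); 0, 1] := by
      rw [← htp, ← Matrix.smul_mul, h4, mul_assoc, hsv', mul_one]
    have h7 := congrArg Matrix.trace h6
    rw [Matrix.trace_smul, Matrix.trace_mul_cycle, hsv, one_mul, ht] at h7
    simp [Matrix.trace_fin_two_of, smul_eq_mul] at h7
    linear_combination h7
  have hr1 : r = 1 := by
    have h8 : (r - 1) ^ 2 = 0 := by linear_combination hdetr - htr
    have := pow_eq_zero_iff (by norm_num : (2 : ℕ) ≠ 0) |>.mp h8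
    linear_combination this
  rw [hzscalar, hr1, one_smul, mul_one] at hkeym
  -- now extract the entries of s
  have hS := Matrix.eta_fin_two ((s : Matrix (Fin 2) (Fin 2) F))
  rw [htp, ht, hS] at hkeym
  have f1 := congrFun (congrFun hkeym 1) 1
  have f2 := congrFun (congrFun hkeym 0) 1
  simp [Matrix.mul_fin_two] at f1 f2
  -- f1 : s10 = 0 (in some form), f2 : s00 relation
  have hs10 : (s : Matrix (Fin 2) (Fin 2) F) 1 0 = 0 := by linear_combination f1
  have hs00 : (s : Matrix (Fin 2) (Fin 2) F) 0 0 =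
      (p : F) * (s : Matrix (Fin 2) (Fin 2) F) 1 1 := by linear_combination f2
  have hs11 : (s : Matrix (Fin 2) (Fin 2) F) 1 1 ≠ 0 := by
    intro h
    apply hdetS
    rw [Matrix.det_fin_two, hs10, hs00, h]
    ring
  -- build g
  have hdg : (!![(p : F), (s : Matrix (Fin 2) (Fin 2) F) 0 1 / (s : Matrix (Fin 2) (Fin 2) F) 1 1;
      0, 1] : Matrix (Fin 2) (Fin 2) F).det ≠ 0 := by
    simpa [Matrix.det_fin_two_of] using hp
  refine ⟨(s : Matrix (Fin 2) (Fin 2) F) 0 1 / (s : Matrix (Fin 2) (Fin 2) F) 1 1,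
    Matrix.GeneralLinearGroup.mkOfDetNeZero _ hdg, rfl, ?_⟩
  set g : GL2 F := Matrix.GeneralLinearGroup.mkOfDetNeZero _ hdg with hg
  set d : F := (s : Matrix (Fin 2) (Fin 2) F) 1 1 with hd
  set u : GL2 F := ⟨d • 1, d⁻¹ • 1, by simp [smul_smul, mul_inv_cancel₀ hs11, inv_mul_cancel₀ hs11],
      by simp [smul_smul, mul_inv_cancel₀ hs11, inv_mul_cancel₀ hs11]⟩ with hu
  have hsug : s = u * g := by
    apply Units.ext
    show (s : Matrix (Fin 2) (Fin 2) F) = (d • 1) * g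
    rw [Matrix.smul_mul, Matrix.one_mul]
    have hgv : (g : Matrix (Fin 2) (Fin 2) F) =
        !![(p : F), (s : Matrix (Fin 2) (Fin 2) F) 0 1 / d; 0, 1] := rfl
    rw [hgv]
    have : d • (!![(p : F), (s : Matrix (Fin 2) (Fin 2) F) 0 1 / d; 0, 1]
        : Matrix (Fin 2) (Fin 2) F) =
        !![d * (p : F), d * ((s : Matrix (Fin 2) (Fin 2) F) 0 1 / d); d * 0, d * 1] := by
      ext i j
      fin_cases i <;> fin_cases j <;> simp
    rw [this]
    rw [mul_div_cancel₀ _ hs11]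
    nth_rewrite 1 [hS]
    rw [hs10, hs00]
    norm_num [mul_comm]
  rw [hsug, QuotientGroup.mk_mul]
  have hu1 : (QuotientGroup.mk u : PGL2 F) = 1 :=
    (QuotientGroup.eq_one_iff u).mpr (scalar_unit_mem_center F d hs11)
  rw [hu1, one_mul]
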